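/- Let F be twice continuously differentiable and strictly concave on ℝ₊ with density f > 0 and f' < 0, and define β̄(ε) = inf over 0 ≤ x ≤ F⁻¹(1−ε) of (−f'(x))/f(x)². Then for grid points a_{j−1} = F⁻¹((j−1)/k), a_j = F⁻¹(j/k), a_{j+1} = F⁻¹((j+1)/k) with 1 ≤ j ≤ k−2, the ratio of consecutive increments satisfies (a_{j+1} − a_j)/(a_j − a_{j−1}) ≥ 1 + (1/(2k)) β̄(1/(2k)). -/

import Mathlib

open Set

/-- `β̄(ε) = inf_{0 ≤ x ≤ F⁻¹(1−ε)} (−f'(x))/f(x)²`, written via the condition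
`F x ≤ 1 − ε` (equivalent to `x ≤ F⁻¹(1−ε)` for strictly increasing `F`). -/
noncomputable def betaBar (F : ℝ → ℝ) (ε : ℝ) : ℝ :=
  sInf {y : ℝ | ∃ x : ℝ, 0 ≤ x ∧ F x ≤ 1 - ε ∧
    y = (-(deriv (deriv F) x)) / (deriv F x) ^ 2}

set_option maxHeartbeats 1000000 in
/-- for grid points `a = F⁻¹((j−1)/k)`, `b = F⁻¹(j/k)`,
`c = F⁻¹((j+1)/k)` with `1 ≤ j ≤ k−2`, the ratio of consecutive increments
satisfies `(c − b)/(b − a) ≥ 1 + (1/(2k)) β̄(1/(2k))`. -/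
theorem increment_ratio_lower_bound (F : ℝ → ℝ)
    (hC2 : ContDiffOn ℝ 2 F (Set.Ici 0))
    (hF0 : F 0 = 0)
    (hmono : StrictMonoOn F (Set.Ici 0))
    (hf : ∀ x ∈ Set.Ici (0 : ℝ), 0 < deriv F x)
    (hf' : ∀ x ∈ Set.Ici (0 : ℝ), deriv (deriv F) x < 0)
    (k j : ℕ) (hj : 1 ≤ j) (hjk : j ≤ k - 2)
    (a b c : ℝ) (ha : a ∈ Set.Ici (0 : ℝ)) (hb : b ∈ Set.Ici (0 : ℝ))
    (hc : c ∈ Set.Ici (0 : ℝ))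
    (hFa : F a = ((j : ℝ) - 1) / k) (hFb : F b = (j : ℝ) / k)
    (hFc : F c = ((j : ℝ) + 1) / k) :
    (c - b) / (b - a) ≥ 1 + (1 / (2 * (k : ℝ))) * betaBar F (1 / (2 * (k : ℝ))) := by
  have hk3 : 3 ≤ k := by omega
  have hj2k : (j : ℝ) + 2 ≤ k := by exact_mod_cast Nat.cast_le.2 (show j + 2 ≤ k by omega)
  have hj1 : (1:ℝ) ≤ j := by exact_mod_cast hj
  have hk0 : (0 : ℝ) < k := by positivity
  set ε : ℝ := 1 / (2 * (k : ℝ)) with hε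
  have hεpos : 0 < ε := by positivity
  have hεk : (1 : ℝ) / k = 2 * ε := by rw [hε]; field_simp
  have hε1 : ε ≤ 1 := by
    rw [hε]; rw [div_le_one (by positivity)]; linarith
  -- ordering of a, b, c
  have hab : a < b := (hmono.lt_iff_lt ha hb).1 (by
    rw [hFa, hFb]; exact div_lt_div_of_pos_right (by linarith) hk0)
  have hbc : b < c := (hmono.lt_iff_lt hb hc).1 (by
    rw [hFb, hFc]; exact div_lt_div_of_pos_right (by linarith) hk0)
  have hb0 : 0 < b := (hmono.lt_iff_lt (self_mem_Ici) hb).1 (by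
    rw [hF0, hFb]; positivity)
  have hba : 0 < b - a := by linarith
  -- grid increments
  have hFba : F b - F a = 2 * ε := by rw [hFa, hFb, ← hεk]; field_simp; ring
  have hFcb : F c - F b = 2 * ε := by rw [hFb, hFc, ← hεk]; field_simp; ring
  -- differentiability package
  have h2Ioi : ContDiffOn ℝ 2 F (Ioi 0) := hC2.mono Ioi_subset_Ici_self
  rw [show (2 : WithTop ℕ∞) = 1 + 1 from rfl,
    contDiffOn_succ_iff_deriv_of_isOpen isOpen_Ioi] at h2Ioi
  have hFdiff : DifferentiableOn ℝ F (Ioi 0) := h2Ioi.1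
  have hcd1 : ContDiffOn ℝ 1 (deriv F) (Ioi 0) := h2Ioi.2.2
  have hFd : ∀ x ∈ Ioi (0:ℝ), HasDerivAt F (deriv F x) x := fun x hx =>
    ((hFdiff x hx).differentiableAt (isOpen_Ioi.mem_nhds hx)).hasDerivAt
  have hdF1cont : ContinuousOn (deriv F) (Ioi 0) := hcd1.continuousOn
  have hdFdiff : DifferentiableOn ℝ (deriv F) (Ioi 0) := hcd1.differentiableOn one_ne_zero
  have hfd : ∀ x ∈ Ioi (0:ℝ), HasDerivAt (deriv F) (deriv (deriv F) x) x := fun x hx =>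
    ((hdFdiff x hx).differentiableAt (isOpen_Ioi.mem_nhds hx)).hasDerivAt
  have contF : ContinuousOn F (Ici 0) := hC2.continuousOn
  -- f strictly decreasing on Ioi 0
  have hanti : StrictAntiOn (deriv F) (Ioi 0) :=
    strictAntiOn_of_deriv_neg (convex_Ioi 0) hdF1cont (fun x hx => by
      rw [interior_Ioi] at hx; exact hf' x (mem_Ici.2 (le_of_lt hx)))
  set B := deriv F b with hBdef
  have hB : 0 < B := hf b hb
  -- Step A : (b-a) * B ≤ 2ε
  obtain ⟨ζ, hζmem, hζeq⟩ := exists_deriv_eq_slope F hab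
    (contF.mono (fun x hx => le_trans ha hx.1))
    (hFdiff.mono (fun x hx => lt_of_le_of_lt ha hx.1))
  rw [eq_div_iff (ne_of_gt hba)] at hζeq
  have hζ0 : ζ ∈ Ioi (0:ℝ) := lt_of_le_of_lt ha hζmem.1
  have hBζ : B ≤ deriv F ζ := le_of_lt (hanti hζ0 (mem_Ioi.2 hb0) hζmem.2)
  have keyA : (b - a) * B ≤ 2 * ε := by
    have h1 : (b - a) * B ≤ (b - a) * deriv F ζ :=
      mul_le_mul_of_nonneg_left hBζ hba.le
    have h2 : deriv F ζ * (b - a) = 2 * ε := by rw [hζeq, hFba]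
    linarith
  -- Step B : Cauchy MVT on [b,c] for u t = B*t - F t and g t = (F t - F b)^2
  have hsubbc : Icc b c ⊆ Ioi (0:ℝ) := fun x hx => lt_of_lt_of_le hb0 hx.1
  obtain ⟨ξ, hξmem, hξeq⟩ := exists_ratio_hasDerivAt_eq_ratio_slope
    (fun t => B * t - F t) (fun t => B - deriv F t) hbc
    ((continuousOn_const.mul continuousOn_id).sub
      (contF.mono (fun x hx => mem_Ici.2 (le_of_lt (hsubbc hx)))))
    (fun x hx => by
      have h := ((hasDerivAt_id x).const_mul B).sub
        (hFd x (lt_of_lt_of_le hb0 hx.1.le))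
      simp only [mul_one] at h; exact h)
    (fun t => (F t - F b)^2) (fun t => 2 * (F t - F b) * deriv F t)
    (((contF.mono (fun x hx => mem_Ici.2 (le_of_lt (hsubbc hx)))).sub continuousOn_const).pow 2)
    (fun x hx => by
      have := ((hFd x (lt_of_lt_of_le hb0 hx.1.le)).sub_const (F b)).pow 2
      exact this.congr_deriv (by push_cast; ring))
  have hξ0 : ξ ∈ Ioi (0:ℝ) := lt_of_lt_of_le hb0 hξmem.1.le
  set X := deriv F ξ with hXdef
  have hX : 0 < X := hf ξ (mem_Ici.2 (le_of_lt hξ0))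
  have hXB : X < B := hanti (mem_Ioi.2 hb0) hξ0 hξmem.1
  -- clean up eqB
  have eqB : (2*ε)^2 * (B - X) = (B * (c - b) - 2*ε) * (2 * (F ξ - F b) * X) := by
    have h1 : F c = F b + 2*ε := by linarith
    rw [h1] at hξeq
    ring_nf at hξeq ⊢
    linarith [hξeq]
  -- Step C : Cauchy MVT on [b, ξ] for deriv F and F
  have hsubbξ : Icc b ξ ⊆ Ioi (0:ℝ) := fun x hx => lt_of_lt_of_le hb0 hx.1
  obtain ⟨x₂, hx₂mem, eqC⟩ := exists_ratio_hasDerivAt_eq_ratio_slope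
    (deriv F) (deriv (deriv F)) hξmem.1
    (hdF1cont.mono hsubbξ)
    (fun x hx => hfd x (lt_of_lt_of_le hb0 hx.1.le))
    F (deriv F)
    (contF.mono (fun x hx => mem_Ici.2 (le_of_lt (hsubbξ hx))))
    (fun x hx => hFd x (lt_of_lt_of_le hb0 hx.1.le))
  -- eqC : (F ξ - F b) * deriv (deriv F) x₂ = (X - B) * deriv F x₂
  have hx₂0 : (0:ℝ) < x₂ := lt_of_lt_of_le hb0 hx₂mem.1.le
  set P := deriv F x₂ with hPdef
  set D := -(deriv (deriv F) x₂) with hDdef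
  have hP : 0 < P := hf x₂ hx₂0.le
  have hD : 0 < D := by
    have := hf' x₂ hx₂0.le; rw [hDdef]; linarith
  have hXP : X < P := hanti (mem_Ioi.2 hx₂0) hξ0 hx₂mem.2
  have hS : 0 < F ξ - F b := by
    have := hmono (mem_Ici.2 (le_of_lt hb0)) (mem_Ici.2 (le_of_lt hξ0)) hξmem.1; linarith
  -- combine: key2 : ((c-b)*B - 2ε) * (2*X*P) = (2ε)^2 * D
  have key2 : ((c - b) * B - 2*ε) * (2 * X * P) = (2*ε)^2 * D := by
    have hSne : F ξ - F b ≠ 0 := ne_of_gt hS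
    apply mul_left_cancel₀ hSne
    have hDval : deriv (deriv F) x₂ = -D := by rw [hDdef]; ring
    rw [hDval] at eqC
    linear_combination (-P) * eqB + (2*ε)^2 * eqC
  -- betaBar bound
  have hβmem : (D / P ^ 2) ∈ {y : ℝ | ∃ x : ℝ, 0 ≤ x ∧ F x ≤ 1 - ε ∧
      y = (-(deriv (deriv F) x)) / (deriv F x) ^ 2} := by
    refine ⟨x₂, hx₂0.le, ?_, by rw [hDdef, hPdef]⟩
    have hx₂c : x₂ < c := lt_trans hx₂mem.2 hξmem.2
    have h1 : F x₂ < F c := hmono hx₂0.le hc hx₂c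
    have h3 : ((j:ℝ)+1)/k ≤ 1 - ε := by
      rw [hε]
      have e : (1:ℝ) - 1/(2*k) = (2*k - 1)/(2*k) := by field_simp
      rw [e, div_le_div_iff₀ hk0 (by positivity)]
      have hint := mul_le_mul_of_nonneg_right (show (j:ℝ) ≤ k - 2 by linarith)
        (by positivity : (0:ℝ) ≤ 2*k)
      linarith [hint, hk0]
    rw [← hFc] at h3
    linarith
  have hbdd : BddBelow {y : ℝ | ∃ x : ℝ, 0 ≤ x ∧ F x ≤ 1 - ε ∧
      y = (-(deriv (deriv F) x)) / (deriv F x) ^ 2} := by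
    refine ⟨0, fun y hy => ?_⟩
    obtain ⟨x, hx0, _, rfl⟩ := hy
    have h1 := hf' x hx0
    have h2 := hf x hx0
    exact le_of_lt (div_pos (by linarith) (by positivity))
  set β := betaBar F ε with hβdef
  have hβle : β ≤ D / P ^ 2 := csInf_le hbdd hβmem
  have hβ0 : 0 ≤ β := by
    refine le_csInf ⟨_, hβmem⟩ (fun y hy => ?_)
    obtain ⟨x, hx0, _, rfl⟩ := hy
    have h1 := hf' x hx0
    have h2 := hf x hx0
    exact le_of_lt (div_pos (by linarith) (by positivity))
  -- final assembly
  have hβP2 : β * P ^ 2 ≤ D := by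
    have := mul_le_mul_of_nonneg_right hβle (sq_nonneg P)
    rwa [div_mul_cancel₀ D (by positivity : P^2 ≠ 0)] at this
  have hXPle : X * P ≤ P ^ 2 := by nlinarith
  have hβXP : β * (X * P) ≤ D :=
    le_trans (mul_le_mul_of_nonneg_left hXPle hβ0) hβP2
  have hA2ge : 2 * ε^2 * β ≤ (c - b) * B - 2*ε := by
    have h2XP : (0:ℝ) < 2 * X * P := by positivity
    apply le_of_mul_le_mul_right _ h2XP
    rw [key2]
    linarith [mul_le_mul_of_nonneg_left hβXP (by positivity : (0:ℝ) ≤ 4*ε^2)]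
  have h1εβ : (0:ℝ) ≤ 1 + ε * β := by linarith [mul_nonneg hεpos.le hβ0]
  rw [ge_iff_le, le_div_iff₀ hba]
  apply le_of_mul_le_mul_right _ hB
  have hintA : (1 + ε * β) * ((b - a) * B) ≤ (1 + ε * β) * (2 * ε) :=
    mul_le_mul_of_nonneg_left keyA h1εβ
  linarith [hintA, hA2ge]
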